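/- Let A, B be real with A⁴ − B² = −1 (so B² = A⁴ + 1 > 0). Then Im F₂ = 0, where Im F₂ = −∫₁^∞ (A² + A⁴)/((2A²s + B²)√(s² − 1)) ds + (1/2)∫₁^∞ log(2A²s + B²)/((s+1)√(s² − 1)) ds. -/

import Mathlib

open MeasureTheory Set Filter
noncomputable def wf (s : ℝ) : ℝ := Real.sqrt (s - 1) / Real.sqrt (s + 1)

lemma wf_one : wf 1 = 0 := by simp [wf]

lemma wf_nonneg (s : ℝ) : 0 ≤ wf s :=
  div_nonneg (Real.sqrt_nonneg _) (Real.sqrt_nonneg _)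

lemma wf_lt_one {s : ℝ} (hs : 1 < s) : wf s < 1 := by
  rw [wf, div_lt_one (Real.sqrt_pos.2 (by linarith))]
  exact Real.sqrt_lt_sqrt (by linarith) (by linarith)

lemma wf_sq {s : ℝ} (hs : 1 < s) : wf s ^ 2 * (s + 1) = s - 1 := by
  rw [wf, div_pow, Real.sq_sqrt (by linarith : (0:ℝ) ≤ s - 1),
    Real.sq_sqrt (by linarith : (0:ℝ) ≤ s + 1)]
  field_simp

lemma sqrt_sq_sub {s : ℝ} (hs : 1 < s) :
    Real.sqrt (s ^ 2 - 1) = Real.sqrt (s - 1) * Real.sqrt (s + 1) := by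
  rw [← Real.sqrt_mul (by linarith : (0:ℝ) ≤ s - 1)]
  ring_nf

lemma hasDerivAt_wf {s : ℝ} (hs : 1 < s) :
    HasDerivAt wf (1 / ((s + 1) * Real.sqrt (s ^ 2 - 1))) s := by
  have h1 : (0:ℝ) < s - 1 := by linarith
  have h2 : (0:ℝ) < s + 1 := by linarith
  have r1 : 0 < Real.sqrt (s - 1) := Real.sqrt_pos.2 h1
  have r2 : 0 < Real.sqrt (s + 1) := Real.sqrt_pos.2 h2
  have d1 : HasDerivAt (fun t : ℝ => Real.sqrt (t - 1)) (1 / (2 * Real.sqrt (s - 1))) s := by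
    have := (Real.hasDerivAt_sqrt h1.ne').comp s ((hasDerivAt_id s).sub_const 1)
    simpa [Function.comp_def] using this
  have d2 : HasDerivAt (fun t : ℝ => Real.sqrt (t + 1)) (1 / (2 * Real.sqrt (s + 1))) s := by
    have := (Real.hasDerivAt_sqrt h2.ne').comp s ((hasDerivAt_id s).add_const 1)
    simpa [Function.comp_def] using this
  have h : HasDerivAt wf _ s := d1.div d2 r2.ne'
  convert h using 1
  rw [sqrt_sq_sub hs]
  have e1 : Real.sqrt (s - 1) ^ 2 = s - 1 := Real.sq_sqrt h1.le
  have e2 : Real.sqrt (s + 1) ^ 2 = s + 1 := Real.sq_sqrt h2.le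
  field_simp
  linear_combination (s + 1) * e1 + (1 - s) * e2

lemma tendsto_wf : Tendsto wf atTop (nhds 1) := by
  have h0 : Tendsto (fun s : ℝ => 1 - 2 / (s + 1)) atTop (nhds 1) := by
    have h : Tendsto (fun s : ℝ => 2 / (s + 1)) atTop (nhds 0) :=
      Tendsto.div_atTop tendsto_const_nhds (tendsto_atTop_add_const_right _ 1 tendsto_id)
    simpa using tendsto_const_nhds.sub h
  have h1 : Tendsto (fun s : ℝ => Real.sqrt (1 - 2 / (s + 1))) atTop (nhds 1) := by
    have := (Real.continuous_sqrt.continuousAt (x := (1:ℝ))).tendsto.comp h0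
    simpa [Function.comp_def] using this
  apply h1.congr'
  filter_upwards [eventually_gt_atTop (1:ℝ)] with s hs
  have h2 : (0:ℝ) < s + 1 := by linarith
  rw [wf, ← Real.sqrt_div (by linarith : (0:ℝ) ≤ s - 1)]
  congr 1
  field_simp
  ring

lemma continuousAt_wf : ContinuousAt wf 1 := by
  have : (0:ℝ) < Real.sqrt (1 + 1) := Real.sqrt_pos.2 (by norm_num)
  exact ContinuousAt.div
    (Real.continuous_sqrt.continuousAt.comp ((continuous_id.sub continuous_const).continuousAt))
    (Real.continuous_sqrt.continuousAt.comp ((continuous_id.add continuous_const).continuousAt))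
    this.ne'

lemma I1_val (a : ℝ) (ha : 0 < a) (ha1 : a ≠ 1) :
    ∫ s in Ioi (1:ℝ), (a + a*a) / ((2*a*s + (a*a+1)) * Real.sqrt (s^2 - 1))
      = a/(1-a) * (Real.log 2 - Real.log (2*a)) := by
  have hd : (1:ℝ) - a ≠ 0 := sub_ne_zero.2 (Ne.symm ha1)
  set g : ℝ → ℝ := fun s => a/(1-a) *
    (Real.log ((1+a) + (1-a) * wf s) - Real.log ((1+a) - (1-a) * wf s)) with hgdef
  have hcont : ContinuousWithinAt g (Ici 1) 1 := by
    apply ContinuousAt.continuousWithinAt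
    have hP : (1+a) + (1-a) * wf 1 ≠ 0 := by rw [wf_one]; simp; linarith
    have hM : (1+a) - (1-a) * wf 1 ≠ 0 := by rw [wf_one]; simp; linarith
    exact continuousAt_const.mul
      (((continuousAt_const.add (continuousAt_const.mul continuousAt_wf)).log hP).sub
        ((continuousAt_const.sub (continuousAt_const.mul continuousAt_wf)).log hM))
  have hderiv : ∀ s ∈ Ioi (1:ℝ), HasDerivAt g
      ((a + a*a) / ((2*a*s + (a*a+1)) * Real.sqrt (s^2 - 1))) s := by
    intro s hs
    simp only [mem_Ioi] at hs
    have hw := hasDerivAt_wf hs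
    have h0 : 0 ≤ wf s := wf_nonneg s
    have h1 : wf s < 1 := wf_lt_one hs
    have hP : 0 < (1+a) + (1-a) * wf s := by nlinarith
    have hM : 0 < (1+a) - (1-a) * wf s := by nlinarith
    have hR : 0 < Real.sqrt (s^2 - 1) := Real.sqrt_pos.2 (by nlinarith)
    have hq : 0 < 2*a*s + (a*a+1) := by nlinarith
    have hs1 : (0:ℝ) < s + 1 := by linarith
    have dP : HasDerivAt (fun t => (1+a) + (1-a) * wf t)
        ((1-a) * (1 / ((s+1) * Real.sqrt (s^2 - 1)))) s :=
      ((hw.const_mul (1-a)).const_add (1+a))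
    have dM : HasDerivAt (fun t => (1+a) - (1-a) * wf t)
        (-((1-a) * (1 / ((s+1) * Real.sqrt (s^2 - 1))))) s :=
      ((hw.const_mul (1-a)).const_sub (1+a))
    have h : HasDerivAt g _ s := ((dP.log hP.ne').sub (dM.log hM.ne')).const_mul (a/(1-a))
    convert h using 1
    have hu2 : wf s ^ 2 * (s + 1) = s - 1 := wf_sq hs
    field_simp
    linear_combination (a + a^2 - a^3 - 1) * hu2
  have hnn : ∀ s ∈ Ioi (1:ℝ),
      0 ≤ (a + a*a) / ((2*a*s + (a*a+1)) * Real.sqrt (s^2 - 1)) := by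
    intro s hs
    simp only [mem_Ioi] at hs
    have hR : 0 < Real.sqrt (s^2 - 1) := Real.sqrt_pos.2 (by nlinarith)
    have hq : 0 < 2*a*s + (a*a+1) := by nlinarith
    positivity
  have hlim : Tendsto g atTop
      (nhds (a/(1-a) * (Real.log 2 - Real.log (2*a)))) := by
    have hP : (1+a) + (1-a) * 1 ≠ 0 := by norm_num
    have hM : (1+a) - (1-a) * 1 ≠ 0 := by intro h; apply ha.ne'; linarith [h]
    have hc : ContinuousAt (fun u : ℝ => a/(1-a) *
        (Real.log ((1+a) + (1-a) * u) - Real.log ((1+a) - (1-a) * u))) 1 :=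
      continuousAt_const.mul
        (((continuousAt_const.add (continuousAt_const.mul continuousAt_id)).log hP).sub
          ((continuousAt_const.sub (continuousAt_const.mul continuousAt_id)).log hM))
    have := hc.tendsto.comp tendsto_wf
    have hval : a/(1-a) * (Real.log ((1+a) + (1-a) * 1) - Real.log ((1+a) - (1-a) * 1))
        = a/(1-a) * (Real.log 2 - Real.log (2*a)) := by
      rw [show (1+a) + (1-a) * 1 = 2 by ring, show (1+a) - (1-a) * 1 = 2*a by ring]
    rw [← hval]
    exact this
  rw [integral_Ioi_of_hasDerivAt_of_nonneg hcont hderiv hnn hlim]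
  simp [hgdef, wf_one]

lemma I2_val (a : ℝ) (ha : 0 < a) (ha1 : a ≠ 1) :
    ∫ s in Ioi (1:ℝ), Real.log (2*a*s + (a*a+1)) / ((s+1) * Real.sqrt (s^2 - 1))
      = (2*Real.log 2 - 2*a*Real.log (2*a))/(1-a) - 2*Real.log 2 := by
  have hd : (1:ℝ) - a ≠ 0 := sub_ne_zero.2 (Ne.symm ha1)
  set G : ℝ → ℝ := fun u => (1/(1-a)) *
      (((1+a) + (1-a)*u) * Real.log ((1+a) + (1-a)*u)
        - ((1+a) - (1-a)*u) * Real.log ((1+a) - (1-a)*u))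
      + (1 - u) * Real.log (1 - u) - (1 + u) * Real.log (1 + u) with hGdef
  have key : ∀ (c d : ℝ), Continuous (fun u : ℝ => (c + d * u) * Real.log (c + d * u)) := by
    intro c d
    simpa [Function.comp_def] using
      Real.continuous_mul_log.comp (continuous_const.add (continuous_const.mul continuous_id))
  have key2 : ∀ (c d : ℝ), Continuous (fun u : ℝ => (c - d * u) * Real.log (c - d * u)) := by
    intro c d
    simpa [Function.comp_def] using
      Real.continuous_mul_log.comp (continuous_const.sub (continuous_const.mul continuous_id))
  have key3 : Continuous (fun u : ℝ => (1 - u) * Real.log (1 - u)) := by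
    simpa [Function.comp_def] using
      Real.continuous_mul_log.comp (continuous_const.sub continuous_id)
  have key4 : Continuous (fun u : ℝ => (1 + u) * Real.log (1 + u)) := by
    simpa [Function.comp_def] using
      Real.continuous_mul_log.comp (continuous_const.add continuous_id)
  have hG : Continuous G :=
    ((continuous_const.mul ((key (1+a) (1-a)).sub (key2 (1+a) (1-a)))).add key3).sub key4
  set g : ℝ → ℝ := fun s => G (wf s) with hgdef
  have hcont : ContinuousWithinAt g (Ici 1) 1 :=
    (hG.continuousAt.comp continuousAt_wf).continuousWithinAt
  have hderiv : ∀ s ∈ Ioi (1:ℝ), HasDerivAt g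
      (Real.log (2*a*s + (a*a+1)) / ((s+1) * Real.sqrt (s^2 - 1))) s := by
    intro s hs
    simp only [mem_Ioi] at hs
    have hw := hasDerivAt_wf hs
    have h0 : 0 ≤ wf s := wf_nonneg s
    have h1 : wf s < 1 := wf_lt_one hs
    have hP : 0 < (1+a) + (1-a) * wf s := by nlinarith
    have hM : 0 < (1+a) - (1-a) * wf s := by nlinarith
    have hR : 0 < Real.sqrt (s^2 - 1) := Real.sqrt_pos.2 (by nlinarith)
    have hq : 0 < 2*a*s + (a*a+1) := by nlinarith
    have hs1 : (0:ℝ) < s + 1 := by linarith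
    have h1u : (0:ℝ) < 1 - wf s := by linarith
    have h1pu : (0:ℝ) < 1 + wf s := by linarith
    have hu2 : wf s ^ 2 * (s + 1) = s - 1 := wf_sq hs
    have dP : HasDerivAt (fun t => (1+a) + (1-a) * wf t)
        ((1-a) * (1 / ((s+1) * Real.sqrt (s^2 - 1)))) s :=
      ((hw.const_mul (1-a)).const_add (1+a))
    have dM : HasDerivAt (fun t => (1+a) - (1-a) * wf t)
        (-((1-a) * (1 / ((s+1) * Real.sqrt (s^2 - 1))))) s :=
      ((hw.const_mul (1-a)).const_sub (1+a))
    have dU : HasDerivAt (fun t => 1 - wf t) (-(1 / ((s+1) * Real.sqrt (s^2 - 1)))) s :=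
      hw.const_sub 1
    have dV : HasDerivAt (fun t => 1 + wf t) (1 / ((s+1) * Real.sqrt (s^2 - 1))) s :=
      hw.const_add 1
    have p1 : HasDerivAt (fun t => ((1+a) + (1-a) * wf t) * Real.log ((1+a) + (1-a) * wf t))
        ((Real.log ((1+a) + (1-a) * wf s) + 1) * ((1-a) * (1 / ((s+1) * Real.sqrt (s^2 - 1))))) s := by
      have := (Real.hasDerivAt_mul_log hP.ne').comp s dP
      simpa [Function.comp_def] using this
    have p2 : HasDerivAt (fun t => ((1+a) - (1-a) * wf t) * Real.log ((1+a) - (1-a) * wf t))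
        ((Real.log ((1+a) - (1-a) * wf s) + 1) * (-((1-a) * (1 / ((s+1) * Real.sqrt (s^2 - 1)))))) s := by
      have := (Real.hasDerivAt_mul_log hM.ne').comp s dM
      simpa [Function.comp_def] using this
    have p3 : HasDerivAt (fun t => (1 - wf t) * Real.log (1 - wf t))
        ((Real.log (1 - wf s) + 1) * (-(1 / ((s+1) * Real.sqrt (s^2 - 1))))) s := by
      have := (Real.hasDerivAt_mul_log h1u.ne').comp s dU
      simpa [Function.comp_def] using this
    have p4 : HasDerivAt (fun t => (1 + wf t) * Real.log (1 + wf t))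
        ((Real.log (1 + wf s) + 1) * (1 / ((s+1) * Real.sqrt (s^2 - 1)))) s := by
      have := (Real.hasDerivAt_mul_log h1pu.ne').comp s dV
      simpa [Function.comp_def] using this
    have total : HasDerivAt g _ s := (((p1.sub p2).const_mul (1/(1-a))).add p3).sub p4
    have hPM : ((1+a) + (1-a) * wf s) * ((1+a) - (1-a) * wf s)
        = (2*a*s + (a*a+1)) * ((1 - wf s) * (1 + wf s)) := by
      linear_combination (2*a) * hu2
    have hlog : Real.log ((1+a) + (1-a) * wf s) + Real.log ((1+a) - (1-a) * wf s)
        = Real.log (2*a*s + (a*a+1)) + (Real.log (1 - wf s) + Real.log (1 + wf s)) := by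
      rw [← Real.log_mul hP.ne' hM.ne', hPM,
        Real.log_mul hq.ne' (mul_pos h1u h1pu).ne', Real.log_mul h1u.ne' h1pu.ne']
    convert total using 1
    field_simp
    rw [show a^2 + 1 = a*a + 1 by ring]
    linear_combination -hlog
  have hnn : ∀ s ∈ Ioi (1:ℝ),
      0 ≤ Real.log (2*a*s + (a*a+1)) / ((s+1) * Real.sqrt (s^2 - 1)) := by
    intro s hs
    simp only [mem_Ioi] at hs
    have hR : 0 < Real.sqrt (s^2 - 1) := Real.sqrt_pos.2 (by nlinarith)
    exact div_nonneg (Real.log_nonneg (by nlinarith)) (by positivity)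
  have hlim : Tendsto g atTop
      (nhds ((2*Real.log 2 - 2*a*Real.log (2*a))/(1-a) - 2*Real.log 2)) := by
    have h := (hG.continuousAt (x := (1:ℝ))).tendsto.comp tendsto_wf
    have hval : G 1 = (2*Real.log 2 - 2*a*Real.log (2*a))/(1-a) - 2*Real.log 2 := by
      rw [hGdef]
      simp only
      rw [show (1+a) + (1-a)*1 = 2 by ring, show (1+a) - (1-a)*1 = 2*a by ring,
        show (1:ℝ) - 1 = 0 by ring]
      simp
      ring
    rw [← hval]
    exact h
  rw [integral_Ioi_of_hasDerivAt_of_nonneg hcont hderiv hnn hlim]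
  have : g 1 = 0 := by
    simp [hgdef, hGdef, wf_one]
  rw [this, sub_zero]

lemma I1_one :
    ∫ s in Ioi (1:ℝ), ((1:ℝ) + 1*1) / ((2*1*s + (1*1+1)) * Real.sqrt (s^2 - 1)) = 1 := by
  have hderiv : ∀ s ∈ Ioi (1:ℝ), HasDerivAt wf
      (((1:ℝ) + 1*1) / ((2*1*s + (1*1+1)) * Real.sqrt (s^2 - 1))) s := by
    intro s hs
    simp only [mem_Ioi] at hs
    have hR : 0 < Real.sqrt (s^2 - 1) := Real.sqrt_pos.2 (by nlinarith)
    convert hasDerivAt_wf hs using 1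
    rw [div_eq_div_iff (by positivity) (by positivity)]
    ring
  have hnn : ∀ s ∈ Ioi (1:ℝ),
      0 ≤ ((1:ℝ) + 1*1) / ((2*1*s + (1*1+1)) * Real.sqrt (s^2 - 1)) := by
    intro s hs
    simp only [mem_Ioi] at hs
    have hR : 0 ≤ Real.sqrt (s^2 - 1) := Real.sqrt_nonneg _
    positivity
  rw [integral_Ioi_of_hasDerivAt_of_nonneg continuousAt_wf.continuousWithinAt
    hderiv hnn tendsto_wf, wf_one, sub_zero]

lemma I2_one :
    ∫ s in Ioi (1:ℝ), Real.log (2*1*s + (1*1+1)) / ((s+1) * Real.sqrt (s^2 - 1)) = 2 := by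
  set G : ℝ → ℝ := fun u => (2*Real.log 2 + 2) * u
      + (1 - u) * Real.log (1 - u) - (1 + u) * Real.log (1 + u) with hGdef
  have key3 : Continuous (fun u : ℝ => (1 - u) * Real.log (1 - u)) := by
    simpa [Function.comp_def] using
      Real.continuous_mul_log.comp (continuous_const.sub continuous_id)
  have key4 : Continuous (fun u : ℝ => (1 + u) * Real.log (1 + u)) := by
    simpa [Function.comp_def] using
      Real.continuous_mul_log.comp (continuous_const.add continuous_id)
  have hG : Continuous G := ((continuous_const.mul continuous_id).add key3).sub key4
  set g : ℝ → ℝ := fun s => G (wf s) with hgdef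
  have hcont : ContinuousWithinAt g (Ici 1) 1 :=
    (hG.continuousAt.comp continuousAt_wf).continuousWithinAt
  have hderiv : ∀ s ∈ Ioi (1:ℝ), HasDerivAt g
      (Real.log (2*1*s + (1*1+1)) / ((s+1) * Real.sqrt (s^2 - 1))) s := by
    intro s hs
    simp only [mem_Ioi] at hs
    have hw := hasDerivAt_wf hs
    have h0 : 0 ≤ wf s := wf_nonneg s
    have h1 : wf s < 1 := wf_lt_one hs
    have hR : 0 < Real.sqrt (s^2 - 1) := Real.sqrt_pos.2 (by nlinarith)
    have hs1 : (0:ℝ) < s + 1 := by linarith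
    have h1u : (0:ℝ) < 1 - wf s := by linarith
    have h1pu : (0:ℝ) < 1 + wf s := by linarith
    have hq : (0:ℝ) < 2*1*s + (1*1+1) := by nlinarith
    have hu2 : wf s ^ 2 * (s + 1) = s - 1 := wf_sq hs
    have dU : HasDerivAt (fun t => 1 - wf t) (-(1 / ((s+1) * Real.sqrt (s^2 - 1)))) s :=
      hw.const_sub 1
    have dV : HasDerivAt (fun t => 1 + wf t) (1 / ((s+1) * Real.sqrt (s^2 - 1))) s :=
      hw.const_add 1
    have p0 : HasDerivAt (fun t => (2*Real.log 2 + 2) * wf t)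
        ((2*Real.log 2 + 2) * (1 / ((s+1) * Real.sqrt (s^2 - 1)))) s :=
      hw.const_mul _
    have p3 : HasDerivAt (fun t => (1 - wf t) * Real.log (1 - wf t))
        ((Real.log (1 - wf s) + 1) * (-(1 / ((s+1) * Real.sqrt (s^2 - 1))))) s := by
      have := (Real.hasDerivAt_mul_log h1u.ne').comp s dU
      simpa [Function.comp_def] using this
    have p4 : HasDerivAt (fun t => (1 + wf t) * Real.log (1 + wf t))
        ((Real.log (1 + wf s) + 1) * (1 / ((s+1) * Real.sqrt (s^2 - 1)))) s := by
      have := (Real.hasDerivAt_mul_log h1pu.ne').comp s dV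
      simpa [Function.comp_def] using this
    have total : HasDerivAt g _ s := (p0.add p3).sub p4
    have hPM : (2*1*s + (1*1+1)) * ((1 - wf s) * (1 + wf s)) = 4 := by
      linear_combination (-2) * hu2
    have hlog : Real.log (2*1*s + (1*1+1)) + (Real.log (1 - wf s) + Real.log (1 + wf s))
        = 2 * Real.log 2 := by
      rw [← Real.log_mul h1u.ne' h1pu.ne', ← Real.log_mul hq.ne' (mul_pos h1u h1pu).ne', hPM,
        show (4:ℝ) = 2^2 by norm_num, Real.log_pow]
      push_cast
      ring
    convert total using 1
    field_simp
    norm_num only at hlog ⊢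
    linear_combination hlog
  have hnn : ∀ s ∈ Ioi (1:ℝ),
      0 ≤ Real.log (2*1*s + (1*1+1)) / ((s+1) * Real.sqrt (s^2 - 1)) := by
    intro s hs
    simp only [mem_Ioi] at hs
    have hR : 0 < Real.sqrt (s^2 - 1) := Real.sqrt_pos.2 (by nlinarith)
    exact div_nonneg (Real.log_nonneg (by nlinarith)) (by positivity)
  have hlim : Tendsto g atTop (nhds 2) := by
    have h := (hG.continuousAt (x := (1:ℝ))).tendsto.comp tendsto_wf
    have hval : G 1 = 2 := by
      rw [hGdef]
      simp only
      rw [show (1:ℝ) - 1 = 0 by ring, show (1:ℝ) + 1 = 2 by ring]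
      simp
    rw [← hval]
    exact h
  rw [integral_Ioi_of_hasDerivAt_of_nonneg hcont hderiv hnn hlim]
  have : g 1 = 0 := by simp [hgdef, hGdef, wf_one]
  rw [this, sub_zero]

lemma key_all (a : ℝ) (ha : 0 ≤ a) :
    -(∫ s in Ioi (1:ℝ), (a + a*a) / ((2*a*s + (a*a+1)) * Real.sqrt (s^2 - 1)))
      + (1/2) * ∫ s in Ioi (1:ℝ),
          Real.log (2*a*s + (a*a+1)) / ((s+1) * Real.sqrt (s^2 - 1)) = 0 := by
  rcases eq_or_lt_of_le ha with h0 | h0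
  · rw [← h0]
    norm_num
  · rcases eq_or_ne a 1 with h1 | h1
    · subst h1
      rw [I1_one, I2_one]
      norm_num
    · rw [I1_val a h0 h1, I2_val a h0 h1]
      have hd : (1:ℝ) - a ≠ 0 := sub_ne_zero.2 (Ne.symm h1)
      field_simp
      ring

/-- For A, B real with A⁴ − B² = −1 (so B² = A⁴ + 1), the imaginary part of F₂ vanishes:
−∫₁^∞ (A² + A⁴)/((2A²s + B²)√(s² − 1)) ds
  + (1/2)∫₁^∞ log(2A²s + B²)/((s + 1)√(s² − 1)) ds = 0. -/
theorem im_F2_eq_zero (A B : ℝ) (hAB : A ^ 4 - B ^ 2 = -1) :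
    -(∫ s in Ioi (1:ℝ),
        (A ^ 2 + A ^ 4) / ((2 * A ^ 2 * s + B ^ 2) * Real.sqrt (s ^ 2 - 1)))
      + (1/2) * ∫ s in Ioi (1:ℝ),
          Real.log (2 * A ^ 2 * s + B ^ 2) / ((s + 1) * Real.sqrt (s ^ 2 - 1))
      = 0 := by
  have hB2 : B ^ 2 = A ^ 2 * A ^ 2 + 1 := by linear_combination -hAB
  have h4 : A ^ 4 = A ^ 2 * A ^ 2 := by ring
  simp only [hB2, h4]
  exact key_all (A ^ 2) (sq_nonneg A)
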